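/- Let S be an N×N Hermitian positive definite matrix with eigenvalues s₁,…,s_N and let d > 0 satisfy d ≤ N·min_i s_i. Among all N×N Hermitian positive definite matrices K with K ⪯ S and tr(K) = d, the minimum of log det(S K⁻¹) is attained at K = (d/N)·I, giving minimum value log det(S) - N·log(d/N). -/

import Mathlib

open Matrix
open scoped ComplexOrder

/-- Trace of a Hermitian matrix equals the sum of its eigenvalues. -/
lemma my_trace_eq_sum_eigenvalues {N : ℕ} {K : Matrix (Fin N) (Fin N) ℂ}
    (hK : K.IsHermitian) : K.trace = ∑ i, (hK.eigenvalues i : ℂ) := by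
  conv_lhs => rw [hK.spectral_theorem, Unitary.conjStarAlgAut_apply]
  rw [trace_mul_cycle,
    (Matrix.mem_unitaryGroup_iff').mp (hK.eigenvectorUnitary).2, one_mul,
    trace_diagonal]
  simp [Function.comp]

/-- AM-GM / Jensen: for a positive definite K with real trace d,
`log det K ≤ N log (d/N)`. -/
lemma my_logdet_le {N : ℕ} (hN : 0 < N) {K : Matrix (Fin N) (Fin N) ℂ}
    (hK : K.PosDef) {d : ℝ} (hd : 0 < d) (htr : K.trace = (d : ℂ)) :
    Real.log K.det.re ≤ (N : ℝ) * Real.log (d / N) := by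
  have hNR : (0 : ℝ) < N := Nat.cast_pos.mpr hN
  have hsum : ∑ i, hK.1.eigenvalues i = d := by
    have := my_trace_eq_sum_eigenvalues hK.1
    rw [htr] at this
    have : ((∑ i, hK.1.eigenvalues i : ℝ) : ℂ) = (d : ℂ) := by
      push_cast
      exact this.symm
    exact_mod_cast this
  have hdet : K.det.re = ∏ i, hK.1.eigenvalues i := by
    have := hK.1.det_eq_prod_eigenvalues
    rw [this]
    norm_cast
  rw [hdet, Real.log_prod (fun i _ => (hK.eigenvalues_pos i).ne')]
  have hjensen : ∑ i : Fin N, (N : ℝ)⁻¹ • Real.log (hK.1.eigenvalues i)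
      ≤ Real.log (∑ i : Fin N, (N : ℝ)⁻¹ • hK.1.eigenvalues i) := by
    apply strictConcaveOn_log_Ioi.concaveOn.le_map_sum
    · intro i _; positivity
    · simp [Finset.sum_const, hNR.ne']
    · intro i _; exact hK.eigenvalues_pos i
  have h2 : (∑ i : Fin N, (N : ℝ)⁻¹ • hK.1.eigenvalues i) = d / N := by
    rw [← Finset.smul_sum, hsum, smul_eq_mul]
    ring
  rw [h2] at hjensen
  calc ∑ i, Real.log (hK.1.eigenvalues i)
      = (N : ℝ) * ∑ i : Fin N, (N : ℝ)⁻¹ • Real.log (hK.1.eigenvalues i) := by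
        rw [Finset.mul_sum]
        refine Finset.sum_congr rfl fun i _ => ?_
        rw [smul_eq_mul, ← mul_assoc, mul_inv_cancel₀ hNR.ne', one_mul]
    _ ≤ (N : ℝ) * Real.log (d / N) := by
        exact mul_le_mul_of_nonneg_left hjensen hNR.le

/-- Reverse water-filling: for S Hermitian positive definite with eigenvalues sᵢ and
0 < d ≤ N·minᵢ sᵢ, among Hermitian positive definite K with K ⪯ S and tr K = d,
log det(S K⁻¹) is minimized by K = (d/N)·I, with minimum log det S - N log(d/N). -/
theorem stmt_10 (N : ℕ) (hN : 0 < N) (S : Matrix (Fin N) (Fin N) ℂ) (hS : S.PosDef)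
    (d : ℝ) (hd : 0 < d) (hdmin : ∀ i, d ≤ N * hS.1.eigenvalues i) :
    (∀ K : Matrix (Fin N) (Fin N) ℂ, K.PosDef → (S - K).PosSemidef → K.trace = (d : ℂ) →
      Real.log S.det.re - (N : ℝ) * Real.log (d / N) ≤ Real.log ((S * K⁻¹).det.re)) ∧
    ((((d / N : ℝ) : ℂ) • (1 : Matrix (Fin N) (Fin N) ℂ)).PosDef ∧
      (S - ((d / N : ℝ) : ℂ) • 1).PosSemidef ∧
      ((((d / N : ℝ) : ℂ) • (1 : Matrix (Fin N) (Fin N) ℂ)).trace = (d : ℂ)) ∧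
      Real.log ((S * ((((d / N : ℝ) : ℂ) • (1 : Matrix (Fin N) (Fin N) ℂ))⁻¹)).det.re)
        = Real.log S.det.re - (N : ℝ) * Real.log (d / N)) := by
  have hNR : (0 : ℝ) < N := Nat.cast_pos.mpr hN
  have hc : (0 : ℝ) < d / N := div_pos hd hNR
  have hSdet : 0 < S.det.re := by
    have := hS.det_pos
    rw [Complex.lt_def] at this
    exact this.1
  have hSim : S.det.im = 0 := by
    have := hS.det_pos
    rw [Complex.lt_def] at this
    simpa using this.2.symm
  constructor
  · intro K hK hSK htr
    have hKdet : 0 < K.det.re := by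
      have := hK.det_pos
      rw [Complex.lt_def] at this
      exact this.1
    have hKim : K.det.im = 0 := by
      have := hK.det_pos
      rw [Complex.lt_def] at this
      simpa using this.2.symm
    have hS' : S.det = (S.det.re : ℂ) := Complex.ext rfl (by simp [hSim])
    have hK' : K.det = (K.det.re : ℂ) := Complex.ext rfl (by simp [hKim])
    have hre : (S * K⁻¹).det = ((S.det.re / K.det.re : ℝ) : ℂ) := by
      rw [det_mul, det_nonsing_inv, Ring.inverse_eq_inv']
      conv_lhs => rw [hS', hK']
      push_cast
      ring
    rw [hre, Complex.ofReal_re, Real.log_div hSdet.ne' hKdet.ne', sub_le_sub_iff_left]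
    exact my_logdet_le hN hK hd htr
  · refine ⟨?_, ?_, ?_, ?_⟩
    · rw [show (((d / N : ℝ) : ℂ) • (1 : Matrix (Fin N) (Fin N) ℂ))
          = diagonal (fun _ => ((d / N : ℝ) : ℂ)) by
        ext i j
        rcases eq_or_ne i j with h | h
        · subst h; simp
        · simp [Matrix.one_apply_ne h, diagonal_apply_ne _ h]]
      rw [posDef_diagonal_iff]
      intro i
      exact_mod_cast hc
    · have key : S - ((d / N : ℝ) : ℂ) • 1
          = (hS.1.eigenvectorUnitary : Matrix (Fin N) (Fin N) ℂ)
            * diagonal (fun i => ((hS.1.eigenvalues i - d / N : ℝ) : ℂ))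
            * star (hS.1.eigenvectorUnitary : Matrix (Fin N) (Fin N) ℂ) := by
        conv_lhs => rw [hS.1.spectral_theorem, Unitary.conjStarAlgAut_apply]
        have h1 : ((d / N : ℝ) : ℂ) • (1 : Matrix (Fin N) (Fin N) ℂ)
            = (hS.1.eigenvectorUnitary : Matrix (Fin N) (Fin N) ℂ)
              * (((d / N : ℝ) : ℂ) • 1)
              * star (hS.1.eigenvectorUnitary : Matrix (Fin N) (Fin N) ℂ) := by
          rw [mul_smul_comm, mul_one, smul_mul_assoc,
            (Matrix.mem_unitaryGroup_iff).mp (hS.1.eigenvectorUnitary).2]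
        rw [h1, ← sub_mul, ← mul_sub]
        congr 2
        ext i j
        rcases eq_or_ne i j with h | h
        · subst h
          simp only [Matrix.sub_apply, Matrix.smul_apply, Matrix.one_apply_eq,
            diagonal_apply_eq, Function.comp_apply, smul_eq_mul, mul_one]
          exact (Complex.ofReal_sub _ _).symm
        · simp [Matrix.one_apply_ne h, diagonal_apply_ne _ h]
      rw [key]
      apply Matrix.PosSemidef.mul_mul_conjTranspose_same
      rw [posSemidef_diagonal_iff]
      intro i
      have : d / N ≤ hS.1.eigenvalues i := (div_le_iff₀' hNR).mpr (hdmin i)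
      have h0 : (0:ℝ) ≤ hS.1.eigenvalues i - d / N := by linarith
      exact_mod_cast h0
    · rw [trace_smul, trace_one, smul_eq_mul, Fintype.card_fin]
      push_cast
      field_simp
    · have hinv : (((d / N : ℝ) : ℂ) • (1 : Matrix (Fin N) (Fin N) ℂ))⁻¹
          = (((d / N : ℝ) : ℂ))⁻¹ • 1 := by
        apply inv_eq_right_inv
        rw [smul_mul_assoc, mul_smul_comm, one_mul, smul_smul,
          mul_inv_cancel₀ (by exact_mod_cast hc.ne' : ((d / N : ℝ) : ℂ) ≠ 0), one_smul]
      rw [hinv, mul_smul_comm, mul_one, det_smul, Fintype.card_fin]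
      have hS' : S.det = (S.det.re : ℂ) := Complex.ext rfl (by simp [hSim])
      conv_lhs => rw [hS']
      rw [← Complex.ofReal_inv, ← Complex.ofReal_pow, ← Complex.ofReal_mul,
        Complex.ofReal_re, Real.log_mul (by positivity) hSdet.ne', Real.log_pow,
        Real.log_inv]
      ring
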